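/- arXiv:1610.09834 — 2 statements merged into one kernel-verified Lean document; each statement's English description precedes it below -/
import Mathlib

section
/- The identity element of F does not belong to the subsemigroup of F generated by {u, v, w} (i.e., no product of a nonempty finite sequence of members of {u, v, w} equals 1), yet the element z₀ · z₁^{-1} belongs to this subsemigroup and has infinitely many distinct factorizations over the family (u, v, w). In particular, a finitely generated subsemigroup of a group can contain an element with infinitely many factorizations without containing the identity. -/
/-- The free group on the three generators `z₀, z₁, a`:
`z₀ = FreeGroup.of (Sum.inl 0)`, `z₁ = FreeGroup.of (Sum.inl 1)`,
`a = FreeGroup.of (Sum.inr ())`. -/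
abbrev Fuvw := FreeGroup (Fin 2 ⊕ Unit)

def z₀ : Fuvw := FreeGroup.of (Sum.inl 0)
def z₁ : Fuvw := FreeGroup.of (Sum.inl 1)
def aGen : Fuvw := FreeGroup.of (Sum.inr ())

/-- `u = z₀ · a · z₀⁻¹`. -/
def u : Fuvw := z₀ * aGen * z₀⁻¹
/-- `v = z₀ · a⁻¹ · z₁⁻¹`. -/
def v : Fuvw := z₀ * aGen⁻¹ * z₁⁻¹
/-- `w = z₁ · a⁻¹ · z₁⁻¹`. -/
def w : Fuvw := z₁ * aGen⁻¹ * z₁⁻¹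

/-- The family `(u, v, w)`, indexed by `Fin 3`. -/
def fam : Fin 3 → Fuvw := ![u, v, w]

namespace NoId

abbrev M2 := Matrix (Fin 2) (Fin 2) ℤ

def Xu : M2ˣ := ⟨!![1,2;0,1], !![1,-2;0,1], by decide, by decide⟩
def Yu : M2ˣ := ⟨!![0,1;-1,0], !![0,-1;1,0], by decide, by decide⟩
def Wu : M2ˣ := ⟨!![1,0;2,1], !![1,0;-2,1], by decide, by decide⟩

noncomputable def φ : Fuvw →* M2ˣ :=
  FreeGroup.lift (Sum.elim ![1, (Xu * Yu)⁻¹] (fun _ => Xu))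

lemma φ_z₀ : φ z₀ = 1 := by
  simp [φ, z₀]
lemma φ_z₁ : φ z₁ = (Xu * Yu)⁻¹ := by
  simp [φ, z₁]
lemma φ_a : φ aGen = Xu := by
  simp [φ, aGen]

lemma φ_u : φ u = Xu := by
  simp [u, map_mul, map_inv, φ_z₀, φ_a]

lemma φ_v : φ v = Yu := by
  simp [v, map_mul, map_inv, φ_z₀, φ_z₁, φ_a]

lemma conjWu : Yu⁻¹ * Xu⁻¹ * Yu = Wu := by
  ext : 1
  show (Yu⁻¹ * Xu⁻¹ * Yu : M2ˣ).val = Wu.val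
  decide

lemma φ_w : φ w = Wu := by
  have : φ w = Yu⁻¹ * Xu⁻¹ * Yu := by
    simp [w, map_mul, map_inv, φ_z₁, φ_a, mul_inv_rev]
  rw [this, conjWu]

def matf : Fin 3 → M2 := ![Xu.val, Yu.val, Wu.val]

lemma val_prod (l : List (Fin 3)) :
    ((φ ((l.map fam).prod)).val : M2) = (l.map matf).prod := by
  induction l with
  | nil => simp
  | cons i t ih =>
    simp only [List.map_cons, List.prod_cons, map_mul, Units.val_mul, ih]
    congr 1
    fin_cases i <;>
      simp [fam, matf, φ_u, φ_v, φ_w]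

/-- entrywise invariant -/
def Q (M : M2) : Prop := 1 ≤ M 0 0 ∧ 0 ≤ M 0 1 ∧ 0 ≤ M 1 0 ∧ 1 ≤ M 1 1

lemma stepX (P : M2) (h : Q P) :
    Q (Xu.val * P) ∧ 1 ≤ (Xu.val * P) 0 1 + (Xu.val * P) 1 0 := by
  obtain ⟨q1, q2, q3, q4⟩ := h
  refine ⟨⟨?_, ?_, ?_, ?_⟩, ?_⟩ <;>
    simp [Xu, Matrix.mul_apply, Fin.sum_univ_two] <;> linarith

lemma stepW (P : M2) (h : Q P) :
    Q (Wu.val * P) ∧ 1 ≤ (Wu.val * P) 0 1 + (Wu.val * P) 1 0 := by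
  obtain ⟨q1, q2, q3, q4⟩ := h
  refine ⟨⟨?_, ?_, ?_, ?_⟩, ?_⟩ <;>
    simp [Wu, Matrix.mul_apply, Fin.sum_univ_two] <;> linarith

lemma invariant (l : List (Fin 3)) (h : 1 ∉ l) :
    Q ((l.map matf).prod) ∧
      (l ≠ [] → 1 ≤ (l.map matf).prod 0 1 + (l.map matf).prod 1 0) := by
  induction l with
  | nil =>
    constructor
    · refine ⟨?_, ?_, ?_, ?_⟩ <;> simp [Matrix.one_apply]
    · intro h; exact absurd rfl h
  | cons i t ih =>
    have hiₜ : 1 ∉ t := fun hm => h (List.mem_cons_of_mem _ hm)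
    obtain ⟨hQ, -⟩ := ih hiₜ
    have hi : i ≠ 1 := fun hi => h (hi ▸ List.mem_cons_self)
    simp only [List.map_cons, List.prod_cons]
    fin_cases i
    · exact ⟨(stepX _ hQ).1, fun _ => (stepX _ hQ).2⟩
    · exact absurd rfl hi
    · exact ⟨(stepW _ hQ).1, fun _ => (stepW _ hQ).2⟩

/-- exponent-counting homomorphism -/
noncomputable def χ : Fuvw →* Multiplicative ℤ :=
  FreeGroup.lift (Sum.elim ![Multiplicative.ofAdd 1, 1] (fun _ => 1))

def cfun : Fin 3 → ℤ := ![0, 1, 0]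

lemma χ_fam (i : Fin 3) : χ (fam i) = Multiplicative.ofAdd (cfun i) := by
  fin_cases i <;>
    simp [fam, cfun, u, v, w, z₀, z₁, aGen, χ, map_mul, map_inv]

lemma χ_prod (l : List (Fin 3)) :
    χ ((l.map fam).prod) = Multiplicative.ofAdd ((l.map cfun).sum) := by
  induction l with
  | nil => simp
  | cons i t ih =>
    simp only [List.map_cons, List.prod_cons, map_mul, ih, χ_fam, List.sum_cons]
    rw [← ofAdd_add]

lemma key (n : ℕ) : u ^ (n + 1) * v * w ^ n = z₀ * z₁⁻¹ := by
  induction n with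
  | zero => simp [u, v, w, z₀, z₁, aGen]; group
  | succ n ih =>
    have : u ^ (n + 2) * v * w ^ (n + 1)
        = u * (u ^ (n + 1) * v * w ^ n) * w := by
      rw [pow_succ w, pow_succ' u (n + 1)]
      ring_nf
      group
    rw [this, ih]
    simp [u, w, z₀, z₁, aGen]
    group

def F (n : ℕ) : List (Fin 3) := List.replicate (n + 1) 0 ++ 1 :: List.replicate n 2

lemma F_prod (n : ℕ) : ((F n).map fam).prod = z₀ * z₁⁻¹ := by
  have h0 : fam 0 = u := rfl
  have h1 : fam 1 = v := rfl
  have h2 : fam 2 = w := rfl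
  rw [← key n]
  simp [F, List.map_append, List.prod_append, List.map_replicate, h0, h1, h2,
    List.prod_replicate, mul_assoc]

lemma F_inj : Function.Injective F := by
  intro m n h
  have := congrArg List.length h
  simp [F, List.length_replicate] at this
  omega

end NoId

/-- The identity of `F` is not a product of a nonempty sequence of members of `{u,v,w}`,
yet `z₀ · z₁⁻¹` is such a product and has infinitely many distinct factorizations over
the family `(u, v, w)`. -/
theorem no_identity_but_infinitely_many_factorizations :
    (¬ ∃ l : List (Fin 3), l ≠ [] ∧ (l.map fam).prod = 1) ∧
      (∃ l : List (Fin 3), l ≠ [] ∧ (l.map fam).prod = z₀ * z₁⁻¹) ∧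
      { l : List (Fin 3) | l ≠ [] ∧ (l.map fam).prod = z₀ * z₁⁻¹ }.Infinite := by
  refine ⟨?_, ⟨NoId.F 0, by simp [NoId.F], NoId.F_prod 0⟩, ?_⟩
  · rintro ⟨l, hne, hprod⟩
    -- no `v` occurs
    have hχ := NoId.χ_prod l
    rw [hprod, map_one] at hχ
    have hsum : (l.map NoId.cfun).sum = 0 := by
      have := hχ.symm
      exact Multiplicative.ofAdd.injective (this.trans ofAdd_zero.symm)
    have hno1 : 1 ∉ l := by
      intro hmem
      have hmem' : (1 : ℤ) ∈ l.map NoId.cfun := by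
        have : NoId.cfun 1 = 1 := rfl
        exact this ▸ List.mem_map_of_mem hmem
      have hle : (1 : ℤ) ≤ (l.map NoId.cfun).sum := by
        refine List.single_le_sum ?_ _ hmem'
        intro x hx
        obtain ⟨i, -, rfl⟩ := List.mem_map.mp hx
        fin_cases i <;> simp [NoId.cfun]
      omega
    -- matrix invariant
    have hval := NoId.val_prod l
    rw [hprod, map_one, Units.val_one] at hval
    obtain ⟨-, hoff⟩ := NoId.invariant l hno1
    have := hoff hne
    rw [← hval] at this
    simp [Matrix.one_apply] at this
  · exact Set.infinite_of_injective_forall_mem (f := NoId.F) NoId.F_inj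
      (fun n => ⟨by simp [NoId.F], NoId.F_prod n⟩)
end

section
/- For every word w = a₁a₂⋯a_n ∈ Σ*, the number of distinct factorizations of the element # · a₁ · a₂ · ⋯ · a_n · # of F over the family W equals the number of indices i ∈ {1,…,m} such that w is accepted by the automaton A_i. In particular, # · a₁ ⋯ a_n · # is a product of a nonempty sequence of members of W if and only if w ∈ L(A₁) ∪ ⋯ ∪ L(A_m), and it has more than k factorizations over W if and only if w is accepted by more than k of the automata. -/
section DFAEncoding

variable {α : Type} [Fintype α] {m : ℕ} {Q : Fin m → Type} [∀ i, Fintype (Q i)]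

/-- The generators of the free group `F`: all states of all the automata
(the state sets are pairwise disjoint, being the summands of a sigma type),
all letters of the alphabet `Σ`, and one extra symbol `#`. -/
abbrev Gen (α : Type) (Q : Fin m → Type) : Type := (Σ i : Fin m, Q i) ⊕ α ⊕ Unit

/-- The free group `F` on the generators above. -/
abbrev Fgrp (α : Type) (Q : Fin m → Type) : Type := FreeGroup (Gen α Q)

/-- The generator corresponding to the state `q` of the `i`-th automaton. -/
def stGen (i : Fin m) (q : Q i) : Fgrp α Q := FreeGroup.of (Sum.inl ⟨i, q⟩)

/-- The generator corresponding to the letter `a ∈ Σ`. -/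
def letGen (a : α) : Fgrp α Q := FreeGroup.of (Sum.inr (Sum.inl a))

/-- The generator corresponding to the symbol `#`. -/
def hashGen : Fgrp α Q := FreeGroup.of (Sum.inr (Sum.inr ()))

/-- The index set of the family `W`: for each automaton `A_i`, one index per
transition (a state together with a letter), one index for the initial-state element
`# · q_{i,0}⁻¹`, and one index per final state. -/
abbrev Widx (α : Type) (Q : Fin m → Type) (A : ∀ i : Fin m, DFA α (Q i)) : Type :=
  (Σ i : Fin m, Q i × α) ⊕ (Fin m) ⊕ (Σ i : Fin m, {q : Q i // q ∈ (A i).accept})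

/-- The family `W`: for each `i`, the element `q · a · (δ_i(q,a))⁻¹` for each state `q`
and letter `a`, the element `# · q_{i,0}⁻¹`, and the element `q · #` for each final
state `q` of `A_i`. -/
def Wfam (A : ∀ i : Fin m, DFA α (Q i)) : Widx α Q A → Fgrp α Q
  | Sum.inl ⟨i, (q, a)⟩ => stGen i q * letGen a * (stGen i ((A i).step q a))⁻¹
  | Sum.inr (Sum.inl i) => hashGen * (stGen i (A i).start)⁻¹
  | Sum.inr (Sum.inr ⟨i, q⟩) => stGen i q.val * hashGen

/-- The element `# · a₁ · a₂ · ⋯ · a_n · #` of `F` associated with the word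
`w = a₁a₂⋯a_n ∈ Σ*`. -/
def wordElem (w : List α) : Fgrp α Q :=
  hashGen * (w.map letGen).prod * hashGen

/-! ### Auxiliary development -/

open FreeGroup List

noncomputable local instance : DecidableEq (Gen α Q) := Classical.decEq _

/-- positive state letter -/
abbrev stL (i : Fin m) (q : Q i) : Gen α Q × Bool := (Sum.inl ⟨i, q⟩, true)
/-- positive alphabet letter -/
abbrev aL (a : α) : Gen α Q × Bool := (Sum.inr (Sum.inl a), true)
/-- positive hash letter -/
abbrev hL : Gen α Q × Bool := (Sum.inr (Sum.inr ()), true)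

variable (A : ∀ i : Fin m, DFA α (Q i))

/-- the reduced word of each member of the family `W` -/
def elemWord : Widx α Q A → List (Gen α Q × Bool)
  | Sum.inl ⟨i, (q, a)⟩ => [stL i q, aL a, (Sum.inl ⟨i, (A i).step q a⟩, false)]
  | Sum.inr (Sum.inl i) => [hL, (Sum.inl ⟨i, (A i).start⟩, false)]
  | Sum.inr (Sum.inr ⟨i, q⟩) => [stL i q.val, hL]

lemma of_eq_mk (g : Gen α Q) : FreeGroup.of g = FreeGroup.mk [(g, true)] := rfl

lemma inv_of_eq_mk (g : Gen α Q) : (FreeGroup.of g)⁻¹ = FreeGroup.mk [(g, false)] := by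
  rw [of_eq_mk, FreeGroup.inv_mk]
  simp [FreeGroup.invRev]

lemma mk_elemWord (x : Widx α Q A) : FreeGroup.mk (elemWord A x) = Wfam A x := by
  rcases x with ⟨i, q, a⟩ | i | ⟨i, q⟩ <;>
    simp [elemWord, Wfam, stGen, letGen, hashGen, of_eq_mk, inv_of_eq_mk, FreeGroup.mul_mk,
      FreeGroup.invRev]

/-- gluing two words, cancelling at most one pair at the junction -/
noncomputable def glue (w₁ w₂ : List (Gen α Q × Bool)) : List (Gen α Q × Bool) :=
  match w₂ with
  | (g, true) :: t => if w₁.getLast? = some (g, false) then w₁.dropLast ++ t else w₁ ++ w₂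
  | _ => w₁ ++ w₂

lemma glue_pos_cons (w₁ : List (Gen α Q × Bool)) (g : Gen α Q) (t : List (Gen α Q × Bool)) :
    glue w₁ ((g, true) :: t) =
      if w₁.getLast? = some (g, false) then w₁.dropLast ++ t else w₁ ++ (g, true) :: t := rfl

lemma glue_nil (w₁ : List (Gen α Q × Bool)) : glue w₁ [] = w₁ := by
  show w₁ ++ [] = w₁; simp

lemma glue_neg_cons (w₁ : List (Gen α Q × Bool)) (g : Gen α Q) (t : List (Gen α Q × Bool)) :
    glue w₁ ((g, false) :: t) = w₁ ++ (g, false) :: t := rfl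

lemma mk_glue (w₁ w₂ : List (Gen α Q × Bool)) :
    FreeGroup.mk (glue w₁ w₂) = FreeGroup.mk w₁ * FreeGroup.mk w₂ := by
  rw [FreeGroup.mul_mk]
  match w₂ with
  | [] => rw [glue_nil]; simp
  | (g, false) :: t => rw [glue_neg_cons]
  | (g, true) :: t =>
    rw [glue_pos_cons]
    split_ifs with h
    · have hne : w₁ ≠ [] := by rintro rfl; simp at h
      have hlast : w₁.getLast hne = (g, false) := by
        rw [List.getLast?_eq_getLast hne, Option.some.injEq] at h; exact h
      have hw : w₁.dropLast ++ [(g, false)] = w₁ := by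
        rw [← hlast]; exact List.dropLast_append_getLast hne
      have e1 : FreeGroup.mk (w₁ ++ (g, true) :: t) =
          FreeGroup.mk w₁.dropLast * ((FreeGroup.of g)⁻¹ * (FreeGroup.of g * FreeGroup.mk t)) := by
        rw [inv_of_eq_mk, of_eq_mk]
        simp only [FreeGroup.mul_mk]
        rw [← hw]
        simp
      rw [e1, inv_mul_cancel_left, FreeGroup.mul_mk]
    · rfl

/-- word of the product of a factorization -/
noncomputable def fword : List (Widx α Q A) → List (Gen α Q × Bool)
  | [] => []
  | x :: l => glue (elemWord A x) (fword l)

lemma prod_eq_mk_fword (l : List (Widx α Q A)) :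
    (l.map (Wfam A)).prod = FreeGroup.mk (fword A l) := by
  induction l with
  | nil => simp [fword, FreeGroup.one_eq_mk]
  | cons x l ih => rw [List.map_cons, List.prod_cons, fword, mk_glue, mk_elemWord, ih]

/-- a word is reduced -/
def RedW (w : List (Gen α Q × Bool)) : Prop :=
  List.Chain' (fun p q : Gen α Q × Bool => ¬(p.1 = q.1 ∧ p.2 = !q.2)) w

/-- only states occur negatively -/
def PosW (w : List (Gen α Q × Bool)) : Prop :=
  ∀ p ∈ w, p.2 = false → ∃ s, p.1 = Sum.inl s

lemma reduce_eq_self {w : List (Gen α Q × Bool)} (h : RedW w) : FreeGroup.reduce w = w := by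
  induction w with
  | nil => rfl
  | cons x w ih =>
    rw [FreeGroup.reduce.cons, ih h.tail]
    cases w with
    | nil => rfl
    | cons y t =>
      have hxy : ¬(x.1 = y.1 ∧ x.2 = !y.2) := (List.isChain_cons_cons.mp h).1
      simp only [hxy, if_false]

lemma mk_inj_of_red {w w' : List (Gen α Q × Bool)} (h : RedW w) (h' : RedW w')
    (e : FreeGroup.mk w = FreeGroup.mk w') : w = w' := by
  have := FreeGroup.reduce.sound e
  rwa [reduce_eq_self h, reduce_eq_self h'] at this

lemma redW_of_all_true {w : List (Gen α Q × Bool)} (h : ∀ p ∈ w, p.2 = true) : RedW w := by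
  induction w with
  | nil => exact List.isChain_nil
  | cons x w ih =>
    rcases w with _ | ⟨y, t⟩
    · exact List.isChain_singleton x
    · refine List.isChain_cons_cons.mpr ⟨?_, ih fun p hp => h p (List.mem_cons_of_mem _ hp)⟩
      have hx := h x List.mem_cons_self
      have hy := h y (List.mem_cons_of_mem _ List.mem_cons_self)
      rintro ⟨-, h2⟩
      rw [hx, hy] at h2
      simp at h2

/-- the reduced word of `wordElem w` -/
def tgtWord (u : List α) : List (Gen α Q × Bool) := hL :: u.map aL ++ [hL]

lemma tgt_all_true {u : List α} : ∀ p ∈ (tgtWord u : List (Gen α Q × Bool)), p.2 = true := by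
  intro p hp
  rcases List.mem_cons.mp hp with rfl | hp
  · rfl
  rcases List.mem_append.mp hp with hp | hp
  · rcases List.mem_map.mp hp with ⟨a, -, rfl⟩; rfl
  · rcases List.mem_singleton.mp hp with rfl; rfl

lemma redW_tgt {u : List α} : RedW (tgtWord u : List (Gen α Q × Bool)) :=
  redW_of_all_true tgt_all_true

lemma wordElem_eq_mk (u : List α) : (wordElem u : Fgrp α Q) = FreeGroup.mk (tgtWord u) := by
  have : ((u.map letGen).prod : Fgrp α Q) = FreeGroup.mk (u.map aL) := by
    induction u with
    | nil => simp [FreeGroup.one_eq_mk]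
    | cons a u ih =>
      simp only [List.map_cons, List.prod_cons, ih, letGen, of_eq_mk, FreeGroup.mul_mk]
      rfl
  rw [wordElem, this, hashGen, of_eq_mk, tgtWord]
  simp only [FreeGroup.mul_mk]
  simp

lemma elem_head (x : Widx α Q A) : ∃ g : Gen α Q, (elemWord A x).head? = some (g, true) := by
  rcases x with ⟨i, q, a⟩ | i | ⟨i, q⟩ <;> exact ⟨_, rfl⟩

lemma posW_cons {z : Gen α Q × Bool} {w : List (Gen α Q × Bool)} :
    PosW (z :: w) ↔ (z.2 = false → ∃ s, z.1 = Sum.inl s) ∧ PosW w := by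
  simp [PosW]

lemma head_ok {w : List (Gen α Q × Bool)} (hpos : PosW w) (c : α ⊕ Unit) :
    ∀ z ∈ w.head?, ¬((Sum.inr c : Gen α Q) = z.1 ∧ true = !z.2) := by
  rintro z hz ⟨h1, h2⟩
  have hmem : z ∈ w := List.mem_of_mem_head? hz
  have hz2 : z.2 = false := by cases hz2 : z.2 <;> simp [hz2] at h2 ⊢
  obtain ⟨s, hs⟩ := hpos z hmem hz2
  rw [hs] at h1
  exact absurd h1 (by simp)

lemma fword_inv : ∀ (l : List (Widx α Q A)) (x : Widx α Q A),
    (fword A (x :: l)).head? = (elemWord A x).head? ∧ PosW (fword A (x :: l)) ∧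
      RedW (fword A (x :: l)) := by
  intro l
  induction l with
  | nil =>
    intro x
    have hfx : fword A [x] = elemWord A x := by
      show glue (elemWord A x) (fword A []) = _
      rw [show fword A [] = [] from rfl, glue_nil]
    rw [hfx]
    refine ⟨rfl, ?_, ?_⟩ <;>
      rcases x with ⟨i, q, a⟩ | i | ⟨i, q⟩ <;>
        simp [elemWord, PosW, RedW, List.Chain', List.isChain_cons, List.isChain_singleton]
  | cons y l ih =>
    intro x
    obtain ⟨hhead, hpos, hred⟩ := ih y
    obtain ⟨g, hg⟩ := elem_head A y
    obtain ⟨t, ht⟩ : ∃ t, fword A (y :: l) = (g, true) :: t := by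
      rw [hg] at hhead
      rcases hw : fword A (y :: l) with _ | ⟨z, t⟩
      · rw [hw] at hhead; simp at hhead
      · rw [hw] at hhead
        simp only [List.head?_cons, Option.some.injEq] at hhead
        exact ⟨t, by rw [hhead]⟩
    have hpost : PosW t := fun p hp => hpos p (ht ▸ List.mem_cons_of_mem _ hp)
    have hredt : RedW t := by have h2 := hred; rw [ht] at h2; exact h2.tail
    rw [ht] at hpos hred
    have hfx : fword A (x :: y :: l) = glue (elemWord A x) ((g, true) :: t) := by
      show glue _ (fword A (y :: l)) = _; rw [ht]
    rw [hfx]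
    rcases x with ⟨i, q, a⟩ | i | ⟨i, q⟩
    · -- transition element
      rw [show elemWord A (Sum.inl ⟨i, (q, a)⟩) =
        [stL i q, aL a, (Sum.inl ⟨i, (A i).step q a⟩, false)] from rfl, glue_pos_cons]
      split_ifs with hc
      · rw [show ([stL i q, aL a, (Sum.inl ⟨i, (A i).step q a⟩, false)] :
            List (Gen α Q × Bool)).dropLast ++ t = stL i q :: aL a :: t from rfl]
        refine ⟨rfl, ?_, ?_⟩
        · rw [posW_cons, posW_cons]
          exact ⟨by simp, by simp, hpost⟩
        · refine List.isChain_cons.mpr ⟨?_, List.isChain_cons.mpr ⟨?_, hredt⟩⟩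
          · rintro z hz ⟨h1, -⟩
            simp only [List.head?_cons, Option.mem_def, Option.some.injEq] at hz
            subst hz; simp [aL] at h1
          · exact head_ok hpost _
      · rw [show ([stL i q, aL a, (Sum.inl ⟨i, (A i).step q a⟩, false)] :
            List (Gen α Q × Bool)) ++ (g, true) :: t =
            stL i q :: aL a :: (Sum.inl ⟨i, (A i).step q a⟩, false) :: (g, true) :: t from rfl]
        refine ⟨rfl, ?_, ?_⟩
        · rw [posW_cons, posW_cons, posW_cons]
          exact ⟨by simp, by simp, by simp, hpos⟩
        · refine List.isChain_cons.mpr ⟨?_, List.isChain_cons.mpr ⟨?_,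
            List.isChain_cons.mpr ⟨?_, hred⟩⟩⟩
          · rintro z hz ⟨h1, -⟩
            simp only [List.head?_cons, Option.mem_def, Option.some.injEq] at hz
            subst hz; simp [aL] at h1
          · rintro z hz ⟨h1, -⟩
            simp only [List.head?_cons, Option.mem_def, Option.some.injEq] at hz
            subst hz; simp [aL] at h1
          · rintro z hz ⟨h1, -⟩
            simp only [List.head?_cons, Option.mem_def, Option.some.injEq] at hz
            subst hz
            simp only at h1
            exact hc (by rw [show ([stL i q, aL a, (Sum.inl ⟨i, (A i).step q a⟩, false)] :
              List (Gen α Q × Bool)).getLast? =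
              some (Sum.inl ⟨i, (A i).step q a⟩, false) from rfl, h1])
    · -- initial element
      rw [show elemWord A (Sum.inr (Sum.inl i)) =
        [hL, (Sum.inl ⟨i, (A i).start⟩, false)] from rfl, glue_pos_cons]
      split_ifs with hc
      · rw [show ([hL, (Sum.inl ⟨i, (A i).start⟩, false)] :
            List (Gen α Q × Bool)).dropLast ++ t = hL :: t from rfl]
        refine ⟨rfl, ?_, ?_⟩
        · rw [posW_cons]; exact ⟨by simp, hpost⟩
        · exact List.isChain_cons.mpr ⟨head_ok hpost _, hredt⟩
      · rw [show ([hL, (Sum.inl ⟨i, (A i).start⟩, false)] :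
            List (Gen α Q × Bool)) ++ (g, true) :: t =
            hL :: (Sum.inl ⟨i, (A i).start⟩, false) :: (g, true) :: t from rfl]
        refine ⟨rfl, ?_, ?_⟩
        · rw [posW_cons, posW_cons]
          exact ⟨by simp, by simp, hpos⟩
        · refine List.isChain_cons.mpr ⟨?_, List.isChain_cons.mpr ⟨?_, hred⟩⟩
          · rintro z hz ⟨h1, -⟩
            simp only [List.head?_cons, Option.mem_def, Option.some.injEq] at hz
            subst hz; simp [hL] at h1
          · rintro z hz ⟨h1, -⟩
            simp only [List.head?_cons, Option.mem_def, Option.some.injEq] at hz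
            subst hz
            simp only at h1
            exact hc (by rw [show ([hL, (Sum.inl ⟨i, (A i).start⟩, false)] :
              List (Gen α Q × Bool)).getLast? =
              some (Sum.inl ⟨i, (A i).start⟩, false) from rfl, h1])
    · -- final element
      rw [show elemWord A (Sum.inr (Sum.inr ⟨i, q⟩)) = [stL i q.val, hL] from rfl, glue_pos_cons]
      rw [if_neg (by simp [hL]), show ([stL i q.val, hL] : List (Gen α Q × Bool)) ++
          (g, true) :: t = stL i q.val :: hL :: (g, true) :: t from rfl]
      refine ⟨rfl, ?_, ?_⟩
      · rw [posW_cons, posW_cons]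
        exact ⟨by simp, by simp, hpos⟩
      · refine List.isChain_cons.mpr ⟨?_, List.isChain_cons.mpr ⟨?_, hred⟩⟩
        · rintro z hz ⟨h1, -⟩
          simp only [List.head?_cons, Option.mem_def, Option.some.injEq] at hz
          subst hz; simp [hL] at h1
        · rintro z hz ⟨-, h2⟩
          simp only [List.head?_cons, Option.mem_def, Option.some.injEq] at hz
          subst hz; simp [hL] at h2

/-- the canonical factorization tail for automaton `i`, reading `u` from state `q` -/
def canonTail (i : Fin m) : (u : List α) → (q : Q i) →
    ((A i).evalFrom q u ∈ (A i).accept) → List (Widx α Q A)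
  | [], q, h => [Sum.inr (Sum.inr ⟨i, ⟨q, h⟩⟩)]
  | a :: u, q, h => Sum.inl ⟨i, (q, a)⟩ :: canonTail i u ((A i).step q a) h

lemma canonTail_prod (i : Fin m) : ∀ (u : List α) (q : Q i)
    (h : (A i).evalFrom q u ∈ (A i).accept),
    ((canonTail A i u q h).map (Wfam A)).prod = stGen i q * (u.map letGen).prod * hashGen := by
  intro u
  induction u with
  | nil => intro q h; simp [canonTail, Wfam]
  | cons a u ih =>
    intro q h
    rw [show canonTail A i (a :: u) q h =
      Sum.inl ⟨i, (q, a)⟩ :: canonTail A i u ((A i).step q a) h from rfl,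
      List.map_cons, List.prod_cons, ih ((A i).step q a) h,
      show Wfam A (Sum.inl ⟨i, (q, a)⟩) =
        stGen i q * letGen a * (stGen i ((A i).step q a))⁻¹ from rfl]
    simp only [List.map_cons, List.prod_cons, mul_assoc, inv_mul_cancel_left]

lemma fword_nonempty {l : List (Widx α Q A)} (hl : l ≠ []) : fword A l ≠ [] := by
  rcases l with _ | ⟨x, l⟩
  · exact absurd rfl hl
  · obtain ⟨hhead, -, -⟩ := fword_inv A l x
    obtain ⟨g, hg⟩ := elem_head A x
    intro h
    rw [h, hg] at hhead
    simp at hhead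

/-- extraction: a factorization whose word is `q · u · #` is the canonical tail -/
lemma extract : ∀ (l : List (Widx α Q A)) (i : Fin m) (q : Q i) (u : List α),
    fword A l = (Sum.inl ⟨i, q⟩, true) :: u.map aL ++ [hL] →
    ∃ h : (A i).evalFrom q u ∈ (A i).accept, l = canonTail A i u q h := by
  intro l
  induction l with
  | nil =>
    intro i q u h
    rw [show fword A [] = [] from rfl] at h
    exact absurd h.symm (by simp)
  | cons x l ih =>
    intro i q u heq
    obtain ⟨hhead, hpos, hred⟩ := fword_inv A l x
    have htgt : ∀ p ∈ ((Sum.inl ⟨i, q⟩, true) :: u.map aL ++ [hL] :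
        List (Gen α Q × Bool)), p.2 = true := by
      intro p hp
      rcases List.mem_cons.mp hp with rfl | hp
      · rfl
      rcases List.mem_append.mp hp with hp | hp
      · rcases List.mem_map.mp hp with ⟨a, -, rfl⟩; rfl
      · rcases List.mem_singleton.mp hp with rfl; rfl
    rcases x with ⟨j, p, a⟩ | j | ⟨j, p⟩
    · -- transition element
      rcases l with _ | ⟨y, l'⟩
      · -- singleton: word contains a negative letter, contradiction
        have hfx : fword A [Sum.inl ⟨j, (p, a)⟩] = elemWord A (Sum.inl ⟨j, (p, a)⟩) := by
          show glue _ (fword A []) = _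
          rw [show fword A [] = [] from rfl, glue_nil]
        rw [hfx] at heq
        have hmem : ((Sum.inl ⟨j, (A j).step p a⟩ : Gen α Q), false) ∈
            elemWord A (Sum.inl ⟨j, (p, a)⟩) := by simp [elemWord]
        rw [heq] at hmem
        have := htgt _ hmem
        simp at this
      · obtain ⟨hhead', hpos', hred'⟩ := fword_inv A l' y
        obtain ⟨g, hg⟩ := elem_head A y
        obtain ⟨t, ht⟩ : ∃ t, fword A (y :: l') = (g, true) :: t := by
          rw [hg] at hhead'
          rcases hw : fword A (y :: l') with _ | ⟨z, t⟩
          · rw [hw] at hhead'; simp at hhead'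
          · rw [hw] at hhead'
            simp only [List.head?_cons, Option.some.injEq] at hhead'
            exact ⟨t, by rw [hhead']⟩
        have hfx : fword A (Sum.inl ⟨j, (p, a)⟩ :: y :: l') =
            glue (elemWord A (Sum.inl ⟨j, (p, a)⟩)) ((g, true) :: t) := by
          show glue _ (fword A (y :: l')) = _; rw [ht]
        rw [hfx, show elemWord A (Sum.inl ⟨j, (p, a)⟩) =
          [stL j p, aL a, (Sum.inl ⟨j, (A j).step p a⟩, false)] from rfl,
          glue_pos_cons] at heq
        by_cases hc : ([stL j p, aL a, (Sum.inl ⟨j, (A j).step p a⟩, false)] :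
            List (Gen α Q × Bool)).getLast? = some (g, false)
        · rw [if_pos hc] at heq
          have hgval : g = Sum.inl ⟨j, (A j).step p a⟩ := by
            simp only [List.getLast?_cons_cons, List.getLast?_singleton,
              Option.some.injEq, Prod.mk.injEq] at hc
            exact hc.1.symm
          rw [show ([stL j p, aL a, (Sum.inl ⟨j, (A j).step p a⟩, false)] :
            List (Gen α Q × Bool)).dropLast ++ t = stL j p :: aL a :: t from rfl] at heq
          rw [List.cons_append] at heq
          obtain ⟨h1, heq2⟩ := List.cons_eq_cons.mp heq
          -- identify automaton and state
          have hsig : (⟨j, p⟩ : Σ i, Q i) = ⟨i, q⟩ := by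
            have := congrArg Prod.fst h1
            simpa using this
          obtain ⟨rfl, hpq⟩ := Sigma.mk.inj_iff.mp hsig
          have hpq' : p = q := eq_of_heq hpq
          subst hpq'
          -- u must start with a
          rcases u with _ | ⟨b, u'⟩
          · simp only [List.map_nil, List.nil_append, List.append_eq] at heq2
            obtain ⟨hab, -⟩ := List.cons_eq_cons.mp heq2
            exact absurd (congrArg Prod.fst hab) (by simp)
          · simp only [List.map_cons, List.cons_append, List.append_eq] at heq2
            obtain ⟨hab, heq3⟩ := List.cons_eq_cons.mp heq2
            have hab' : a = b := by
              have h5 := congrArg Prod.fst hab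
              simpa [aL] using h5
            subst hab'
            have hft : fword A (y :: l') = (Sum.inl ⟨j, (A j).step p a⟩, true) ::
                u'.map aL ++ [hL] := by
              rw [ht, hgval, heq3]; rfl
            obtain ⟨hacc, hl'⟩ := ih j ((A j).step p a) u' hft
            refine ⟨hacc, ?_⟩
            rw [show canonTail A j (a :: u') p hacc =
              Sum.inl ⟨j, (p, a)⟩ :: canonTail A j u' ((A j).step p a) hacc from rfl, hl']
        · rw [if_neg hc] at heq
          have hmem : ((Sum.inl ⟨j, (A j).step p a⟩ : Gen α Q), false) ∈
              ([stL j p, aL a, (Sum.inl ⟨j, (A j).step p a⟩, false)] :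
                List (Gen α Q × Bool)) ++ (g, true) :: t := by simp
          rw [heq] at hmem
          have := htgt _ hmem
          simp at this
    · -- initial element: head is #, but target head is a state
      have hhd : (fword A (Sum.inr (Sum.inl j) :: l)).head? = some hL := by
        rw [hhead]; rfl
      rw [heq] at hhd
      simp only [List.cons_append, List.head?_cons, Option.some.injEq] at hhd
      exact absurd (congrArg Prod.fst hhd) (by simp [hL])
    · -- final element
      rcases l with _ | ⟨y, l'⟩
      · have hfx : fword A [Sum.inr (Sum.inr ⟨j, p⟩)] =
            elemWord A (Sum.inr (Sum.inr ⟨j, p⟩)) := by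
          show glue _ (fword A []) = _
          rw [show fword A [] = [] from rfl, glue_nil]
        rw [hfx, show elemWord A (Sum.inr (Sum.inr ⟨j, p⟩)) = [stL j p.val, hL] from rfl] at heq
        obtain ⟨h1, heq2⟩ := List.cons_eq_cons.mp heq
        have hsig : (⟨j, p.val⟩ : Σ i, Q i) = ⟨i, q⟩ := by
          have := congrArg Prod.fst h1
          simpa using this
        obtain ⟨rfl, hpq⟩ := Sigma.mk.inj_iff.mp hsig
        have hpq' : p.val = q := eq_of_heq hpq
        subst hpq'
        rcases u with _ | ⟨b, u'⟩
        · exact ⟨p.property, rfl⟩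
        · simp only [List.map_cons, List.cons_append, List.append_eq] at heq2
          obtain ⟨hab, -⟩ := List.cons_eq_cons.mp heq2
          exact absurd (congrArg Prod.fst hab) (by simp [hL, aL])
      · obtain ⟨hhead', hpos', hred'⟩ := fword_inv A l' y
        obtain ⟨g, hg⟩ := elem_head A y
        obtain ⟨t, ht⟩ : ∃ t, fword A (y :: l') = (g, true) :: t := by
          rw [hg] at hhead'
          rcases hw : fword A (y :: l') with _ | ⟨z, t⟩
          · rw [hw] at hhead'; simp at hhead'
          · rw [hw] at hhead'
            simp only [List.head?_cons, Option.some.injEq] at hhead'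
            exact ⟨t, by rw [hhead']⟩
        have hfx : fword A (Sum.inr (Sum.inr ⟨j, p⟩) :: y :: l') =
            glue (elemWord A (Sum.inr (Sum.inr ⟨j, p⟩))) ((g, true) :: t) := by
          show glue _ (fword A (y :: l')) = _; rw [ht]
        rw [hfx, show elemWord A (Sum.inr (Sum.inr ⟨j, p⟩)) = [stL j p.val, hL] from rfl,
          glue_pos_cons, if_neg (by simp [hL]),
          show ([stL j p.val, hL] : List (Gen α Q × Bool)) ++ (g, true) :: t =
            stL j p.val :: hL :: (g, true) :: t from rfl] at heq
        obtain ⟨-, heq2⟩ := List.cons_eq_cons.mp heq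
        -- hL :: (g,true) :: t = u.map aL ++ [hL] : impossible since the word after the hash
        -- would have to be empty but (g,true) :: t is nonempty
        rcases u with _ | ⟨b, u'⟩
        · simp only [List.map_nil, List.nil_append] at heq2
          exact absurd (congrArg List.length heq2) (by simp)
        · simp only [List.map_cons, List.cons_append, List.append_eq] at heq2
          obtain ⟨hab, -⟩ := List.cons_eq_cons.mp heq2
          exact absurd (congrArg Prod.fst hab) (by simp [hL, aL])

/-- the key characterization of factorizations of `wordElem w` -/
lemma main_iff (w : List α) (l : List (Widx α Q A)) :
    (l ≠ [] ∧ (l.map (Wfam A)).prod = wordElem w) ↔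
      ∃ (i : Fin m) (h : w ∈ (A i).accepts),
        l = Sum.inr (Sum.inl i) :: canonTail A i w (A i).start (((A i).mem_accepts).mp h) := by
  constructor
  · rintro ⟨hne, hprod⟩
    have hw : fword A l = tgtWord w := by
      refine mk_inj_of_red ?_ redW_tgt ?_
      · rcases l with _ | ⟨x, l'⟩
        · exact absurd rfl hne
        · exact (fword_inv A l' x).2.2
      · rw [← prod_eq_mk_fword, hprod, wordElem_eq_mk]
    rcases l with _ | ⟨x, l'⟩
    · exact absurd rfl hne
    obtain ⟨hhead, hpos, hred⟩ := fword_inv A l' x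
    have hhd : (fword A (x :: l')).head? = some (hL : Gen α Q × Bool) := by
      rw [hw]; rfl
    rcases x with ⟨j, p, a⟩ | j | ⟨j, p⟩
    · rw [hhead] at hhd
      exact absurd (congrArg Prod.fst (Option.some.inj hhd)) (by simp)
    · -- initial element
      rcases l' with _ | ⟨y, l''⟩
      · have hfx : fword A [Sum.inr (Sum.inl j)] = elemWord A (Sum.inr (Sum.inl j)) := by
          show glue _ (fword A []) = _
          rw [show fword A [] = [] from rfl, glue_nil]
        have hmem : ((Sum.inl ⟨j, (A j).start⟩ : Gen α Q), false) ∈ fword A [Sum.inr (Sum.inl j)] := by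
          rw [hfx]; simp [elemWord]
        rw [hw] at hmem
        have := tgt_all_true _ hmem
        simp at this
      · obtain ⟨hhead', hpos', hred'⟩ := fword_inv A l'' y
        obtain ⟨g, hg⟩ := elem_head A y
        obtain ⟨t, ht⟩ : ∃ t, fword A (y :: l'') = (g, true) :: t := by
          rw [hg] at hhead'
          rcases hw2 : fword A (y :: l'') with _ | ⟨z, t⟩
          · rw [hw2] at hhead'; simp at hhead'
          · rw [hw2] at hhead'
            simp only [List.head?_cons, Option.some.injEq] at hhead'
            exact ⟨t, by rw [hhead']⟩
        have hfx : fword A (Sum.inr (Sum.inl j) :: y :: l'') =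
            glue (elemWord A (Sum.inr (Sum.inl j))) ((g, true) :: t) := by
          show glue _ (fword A (y :: l'')) = _; rw [ht]
        rw [hfx, show elemWord A (Sum.inr (Sum.inl j)) =
          [hL, (Sum.inl ⟨j, (A j).start⟩, false)] from rfl, glue_pos_cons] at hw
        by_cases hc : ([hL, (Sum.inl ⟨j, (A j).start⟩, false)] :
            List (Gen α Q × Bool)).getLast? = some (g, false)
        · rw [if_pos hc] at hw
          have hgval : g = Sum.inl ⟨j, (A j).start⟩ := by
            simp only [List.getLast?_cons_cons, List.getLast?_singleton,
              Option.some.injEq, Prod.mk.injEq] at hc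
            exact hc.1.symm
          rw [show ([hL, (Sum.inl ⟨j, (A j).start⟩, false)] :
            List (Gen α Q × Bool)).dropLast ++ t = hL :: t from rfl, tgtWord,
            List.cons_append] at hw
          obtain ⟨-, ht2⟩ := List.cons_eq_cons.mp hw
          have hft : fword A (y :: l'') = (Sum.inl ⟨j, (A j).start⟩, true) ::
              w.map aL ++ [hL] := by
            rw [ht, hgval, ht2]; rfl
          obtain ⟨hacc, hl''⟩ := extract A (y :: l'') j (A j).start w hft
          refine ⟨j, ((A j).mem_accepts).mpr hacc, ?_⟩
          rw [hl'']
        · rw [if_neg hc] at hw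
          have hmem : ((Sum.inl ⟨j, (A j).start⟩ : Gen α Q), false) ∈
              ([hL, (Sum.inl ⟨j, (A j).start⟩, false)] : List (Gen α Q × Bool)) ++
                (g, true) :: t := by simp
          rw [hw] at hmem
          have := tgt_all_true _ hmem
          simp at this
    · rw [hhead] at hhd
      exact absurd (congrArg Prod.fst (Option.some.inj hhd)) (by simp)
  · rintro ⟨i, h, rfl⟩
    refine ⟨List.cons_ne_nil _ _, ?_⟩
    erw [List.map_cons, List.prod_cons, canonTail_prod,
      show Wfam A (Sum.inr (Sum.inl i)) = hashGen * (stGen i (A i).start)⁻¹ from rfl, wordElem]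
    simp [mul_assoc]

/-- For every word `w ∈ Σ*`, the number of distinct factorizations of
`# · a₁ ⋯ a_n · #` over the family `W` equals the number of automata accepting `w`;
in particular `# · a₁ ⋯ a_n · #` is a nonempty product of members of `W` iff some
automaton accepts `w`, and it has more than `k` factorizations iff more than `k` of
the automata accept `w`. -/
theorem factorizations_count_eq_accepting_count
    (A : ∀ i : Fin m, DFA α (Q i)) (w : List α) :
    { l : List (Widx α Q A) | l ≠ [] ∧ (l.map (Wfam A)).prod = wordElem w }.ncard =
        { i : Fin m | w ∈ (A i).accepts }.ncard ∧
      ((∃ l : List (Widx α Q A), l ≠ [] ∧ (l.map (Wfam A)).prod = wordElem w) ↔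
        ∃ i : Fin m, w ∈ (A i).accepts) ∧
      (∀ k : ℕ,
        k < { l : List (Widx α Q A) | l ≠ [] ∧
                (l.map (Wfam A)).prod = wordElem w }.ncard ↔
          k < { i : Fin m | w ∈ (A i).accepts }.ncard) := by
  classical
  set g : Fin m → List (Widx α Q A) := fun i =>
    if h : w ∈ (A i).accepts then
      Sum.inr (Sum.inl i) :: canonTail A i w (A i).start (((A i).mem_accepts).mp h)
    else [] with hgdef
  have hset : { l : List (Widx α Q A) | l ≠ [] ∧ (l.map (Wfam A)).prod = wordElem w } =
      g '' { i : Fin m | w ∈ (A i).accepts } := by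
    ext l
    simp only [Set.mem_setOf_eq, Set.mem_image]
    rw [main_iff]
    constructor
    · rintro ⟨i, h, rfl⟩
      exact ⟨i, h, by rw [hgdef]; simp only; rw [dif_pos h]⟩
    · rintro ⟨i, h, rfl⟩
      exact ⟨i, h, by rw [hgdef]; simp only; rw [dif_pos h]⟩
  have hinj : Set.InjOn g { i : Fin m | w ∈ (A i).accepts } := by
    intro i hi j hj hij
    rw [Set.mem_setOf_eq] at hi hj
    rw [hgdef] at hij
    simp only at hij
    rw [dif_pos hi, dif_pos hj] at hij
    have := (List.cons_eq_cons.mp hij).1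
    simpa using this
  have hcard : { l : List (Widx α Q A) | l ≠ [] ∧ (l.map (Wfam A)).prod = wordElem w }.ncard =
      { i : Fin m | w ∈ (A i).accepts }.ncard := by
    rw [hset, Set.ncard_image_of_injOn hinj]
  refine ⟨hcard, ?_, fun k => by rw [hcard]⟩
  constructor
  · rintro ⟨l, hne, hprod⟩
    obtain ⟨i, h, -⟩ := (main_iff A w l).mp ⟨hne, hprod⟩
    exact ⟨i, h⟩
  · rintro ⟨i, h⟩
    exact ⟨_, (main_iff A w _).mpr ⟨i, h, rfl⟩⟩

end DFAEncoding
end
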